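/- Let E be a set, let ι : ⊕_E ℤ → ⊕_E ℝ be the natural embedding of finitely supported integer-valued functions into the real vector space of finitely supported functions E → ℝ, and let P ⊆ ⊕_E ℤ satisfy: P + P ⊆ P, P ∩ (−P) = {0}, and n • x ∈ P for some integer n ≥ 1 implies x ∈ P (i.e. P is the positive cone of a semiclosed po-group order on ⊕_E ℤ). Let C := convexHull_ℝ (ι '' P). Then C equals the set of all finite nonnegative real linear combinations of elements of ι '' P, C + C ⊆ C, α • C ⊆ C for every real α ≥ 0, C ∩ (−C) = {0}, and C ∩ ι''(⊕_E ℤ) = ι '' P. In particular, the assignment P ↦ convexHull_ℝ (ι '' P) is an injective map from semiclosed po-group positive cones on ⊕_E ℤ to vector-space positive cones on ⊕_E ℝ. -/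

import Mathlib

lemma stmt9key {E κ : Type*} (s : Finset κ) (v : κ → (E →₀ ℤ)) (c : κ → ℝ)
    (hc : ∀ i ∈ s, 0 < c i)
    (hrel : ∀ e : E, ∑ i ∈ s, c i * (v i e : ℝ) = 0) :
    ∃ n : κ → ℤ, (∀ i ∈ s, 1 ≤ n i) ∧ ∀ e : E, ∑ i ∈ s, n i * v i e = 0 := by
  classical
  rcases s.eq_empty_or_nonempty with rfl | hs
  · exact ⟨fun _ => 1, by simp, by simp⟩
  set b := Module.Basis.ofVectorSpace ℚ ℝ with hb
  set t : _ → κ → ℚ := fun j i => b.repr (c i) j with ht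
  have hQrel : ∀ j, ∀ e : E, ∑ i ∈ s, t j i * (v i e : ℚ) = 0 := by
    intro j e
    have h0 : (∑ i ∈ s, ((v i e : ℚ)) • c i) = 0 := by
      rw [← hrel e]
      refine Finset.sum_congr rfl fun i _ => ?_
      rw [Rat.smul_def]; push_cast; ring
    have h1 := congrArg (fun x => b.repr x j) h0
    simpa [map_sum, map_smul, Finsupp.finset_sum_apply, Finsupp.smul_apply,
      smul_eq_mul, ht, mul_comm] using h1
  set J : Finset _ := s.sup (fun i => (b.repr (c i)).support) with hJ
  have hct : ∀ i ∈ s, c i = ∑ j ∈ J, (t j i : ℝ) * b j := by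
    intro i hi
    conv_lhs => rw [← b.linearCombination_repr (c i)]
    rw [Finsupp.linearCombination_apply, Finsupp.sum,
      Finset.sum_subset (Finset.le_sup (f := fun i => (b.repr (c i)).support) hi)]
    · exact Finset.sum_congr rfl fun j _ => by rw [Rat.smul_def]
    · intro j _ hj
      rw [Finsupp.notMem_support_iff.mp hj, zero_smul]
  obtain ⟨i₀, hi₀, hmin⟩ := s.exists_min_image c hs
  set m := c i₀ with hm
  have hm0 : 0 < m := hc i₀ hi₀
  set M : ℝ := 1 + ∑ i ∈ s, ∑ j ∈ J, |(t j i : ℝ)| with hM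
  have hM1 : 1 ≤ M := by
    have : (0:ℝ) ≤ ∑ i ∈ s, ∑ j ∈ J, |(t j i : ℝ)| :=
      Finset.sum_nonneg fun i _ => Finset.sum_nonneg fun j _ => abs_nonneg _
    linarith
  have hM0 : 0 < M := lt_of_lt_of_le one_pos hM1
  have hTy : ∀ i ∈ s, ∑ j ∈ J, |(t j i : ℝ)| ≤ M - 1 := by
    intro i hi
    have := Finset.single_le_sum
      (f := fun i => ∑ j ∈ J, |(t j i : ℝ)|)
      (fun i _ => Finset.sum_nonneg fun j _ => abs_nonneg _) hi
    simp only [hM]; linarith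
  have hε : 0 < m / M := div_pos hm0 hM0
  have hr : ∀ j : ↑(Module.Basis.ofVectorSpaceIndex ℚ ℝ), ∃ q : ℚ, |b j - q| < m / M :=
    fun j => exists_rat_near (b j) hε
  choose r hrr using hr
  set q : κ → ℚ := fun i => ∑ j ∈ J, t j i * r j with hqdef
  have hqcast : ∀ i, ((q i : ℝ)) = ∑ j ∈ J, (t j i : ℝ) * (r j : ℝ) := by
    intro i; rw [hqdef]; push_cast; rfl
  have hq : ∀ i ∈ s, 0 < q i := by
    intro i hi
    have hdiff : c i - (q i : ℝ) = ∑ j ∈ J, (t j i : ℝ) * (b j - r j) := by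
      rw [hqcast, hct i hi, ← Finset.sum_sub_distrib]
      exact Finset.sum_congr rfl fun j _ => by ring
    have habs : c i - (q i : ℝ) ≤ (M - 1) * (m / M) := by
      calc c i - (q i : ℝ) ≤ |c i - (q i : ℝ)| := le_abs_self _
        _ ≤ ∑ j ∈ J, |(t j i : ℝ) * (b j - r j)| := by
            rw [hdiff]; exact Finset.abs_sum_le_sum_abs _ _
        _ ≤ ∑ j ∈ J, |(t j i : ℝ)| * (m / M) := by
            refine Finset.sum_le_sum fun j _ => ?_
            rw [abs_mul]
            exact mul_le_mul_of_nonneg_left (le_of_lt (hrr j)) (abs_nonneg _)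
        _ = (∑ j ∈ J, |(t j i : ℝ)|) * (m / M) := by rw [Finset.sum_mul]
        _ ≤ (M - 1) * (m / M) :=
            mul_le_mul_of_nonneg_right (hTy i hi) (le_of_lt hε)
    have hlt : (M - 1) * (m / M) < m := by
      rw [mul_div_assoc']
      rw [div_lt_iff₀ hM0]
      nlinarith
    have : (0:ℝ) < (q i : ℝ) := by
      have := hmin i hi
      nlinarith
    exact_mod_cast this
  have hqrel : ∀ e : E, ∑ i ∈ s, q i * (v i e : ℚ) = 0 := by
    intro e
    have : ∑ i ∈ s, q i * (v i e : ℚ)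
        = ∑ j ∈ J, r j * ∑ i ∈ s, t j i * (v i e : ℚ) := by
      simp only [hqdef, Finset.sum_mul, Finset.mul_sum]
      rw [Finset.sum_comm]
      exact Finset.sum_congr rfl fun j _ => Finset.sum_congr rfl fun i _ => by ring
    rw [this]
    simp [hQrel]
  set N : ℕ := ∏ i ∈ s, (q i).den with hN
  have hN0 : 0 < N := Finset.prod_pos fun i _ => (q i).pos
  set n : κ → ℤ := fun i => (q i).num * ((N / (q i).den : ℕ) : ℤ) with hn
  have hcast : ∀ i ∈ s, ((n i : ℤ) : ℚ) = q i * N := by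
    intro i hi
    have hdvd : (q i).den ∣ N := Finset.dvd_prod_of_mem _ hi
    have hkk : ((q i).den : ℚ) * ((N / (q i).den : ℕ) : ℚ) = (N : ℚ) := by
      rw [← Nat.cast_mul, Nat.mul_div_cancel' hdvd]
    rw [hn]
    rw [Int.cast_mul, Int.cast_natCast, ← hkk, ← mul_assoc, Rat.mul_den_eq_num]
  refine ⟨n, ?_, ?_⟩
  · intro i hi
    have hk : 0 < N / (q i).den :=
      Nat.div_pos (Nat.le_of_dvd hN0 (Finset.dvd_prod_of_mem _ hi)) (q i).pos
    have hnum : 0 < (q i).num := Rat.num_pos.mpr (hq i hi)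
    have hpos : (0:ℤ) < n i := mul_pos hnum (by exact_mod_cast hk)
    omega
  · intro e
    have key2 : ((∑ i ∈ s, n i * ((v i) e) : ℤ) : ℚ) = 0 := by
      rw [Int.cast_sum]
      calc ∑ i ∈ s, ((n i * ((v i) e) : ℤ) : ℚ)
          = ∑ i ∈ s, (q i * N) * ((v i) e : ℚ) := by
            refine Finset.sum_congr rfl fun i hi => ?_
            rw [Int.cast_mul, hcast i hi]
        _ = N * ∑ i ∈ s, q i * ((v i) e : ℚ) := by
            rw [Finset.mul_sum]
            exact Finset.sum_congr rfl fun i _ => by ring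
        _ = 0 := by rw [hqrel e, mul_zero]
    exact_mod_cast key2

lemma stmt9comb {V : Type*} [AddCommGroup V] [Module ℝ V] [DecidableEq V]
    (s₁ s₂ : Finset V) (c₁ c₂ : V → ℝ) :
    ∑ y ∈ s₁ ∪ s₂, ((if y ∈ s₁ then c₁ y else 0) + (if y ∈ s₂ then c₂ y else 0)) • y
      = (∑ y ∈ s₁, c₁ y • y) + ∑ y ∈ s₂, c₂ y • y := by
  simp only [add_smul, Finset.sum_add_distrib, ite_smul, zero_smul]
  rw [Finset.sum_ite_mem, Finset.sum_ite_mem, Finset.union_inter_cancel_left,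
    Finset.union_inter_cancel_right]

open Pointwise in
theorem stmt9aux {E : Type*}
    (ι : (E →₀ ℤ) → (E →₀ ℝ))
    (hι : ι = Finsupp.mapRange (fun z : ℤ => (z : ℝ)) (by norm_num))
    (P : Set (E →₀ ℤ))
    (hadd : ∀ x ∈ P, ∀ y ∈ P, x + y ∈ P)
    (hpure : P ∩ (-P) = {0})
    (hsemi : ∀ (n : ℤ), 1 ≤ n → ∀ x : E →₀ ℤ, n • x ∈ P → x ∈ P) :
    (convexHull ℝ (ι '' P) =
      {x | ∃ (s : Finset (E →₀ ℝ)) (c : (E →₀ ℝ) → ℝ),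
        ↑s ⊆ ι '' P ∧ (∀ y ∈ s, 0 ≤ c y) ∧ ∑ y ∈ s, c y • y = x}) ∧
    (∀ x ∈ convexHull ℝ (ι '' P), ∀ y ∈ convexHull ℝ (ι '' P),
      x + y ∈ convexHull ℝ (ι '' P)) ∧
    (∀ (α : ℝ), 0 ≤ α → ∀ x ∈ convexHull ℝ (ι '' P),
      α • x ∈ convexHull ℝ (ι '' P)) ∧
    (convexHull ℝ (ι '' P) ∩ (-(convexHull ℝ (ι '' P))) = {0}) ∧
    (convexHull ℝ (ι '' P) ∩ Set.range ι = ι '' P) := by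
  classical
  have hι0 : ι 0 = 0 := by rw [hι]; ext e; simp
  have hιadd : ∀ x y, ι (x + y) = ι x + ι y := by
    intro x y; rw [hι]; exact Finsupp.mapRange_add (fun a b => by push_cast; ring) x y
  have hιapp : ∀ (y : E →₀ ℤ) (e : E), ι y e = ((y e : ℤ) : ℝ) := by
    intro y e; rw [hι, Finsupp.mapRange_apply]
  have h0P : (0 : E →₀ ℤ) ∈ P := by
    have h : (0 : E →₀ ℤ) ∈ ({0} : Set (E →₀ ℤ)) := rfl
    rw [← hpure] at h; exact h.1
  have hnsmulP : ∀ (k : ℕ) (p : E →₀ ℤ), p ∈ P → k • p ∈ P := by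
    intro k p hp
    induction k with
    | zero => simpa using h0P
    | succ k ih => rw [succ_nsmul]; exact hadd _ ih _ hp
  have hzsmulP : ∀ (k : ℤ), 1 ≤ k → ∀ p ∈ P, k • p ∈ P := by
    intro k hk p hp
    have h1 : k = (k.toNat : ℤ) := (Int.toNat_of_nonneg (by omega)).symm
    rw [h1, natCast_zsmul]
    exact hnsmulP _ p hp
  have hsumP : ∀ (u : Finset (E →₀ ℝ)) (f : (E →₀ ℝ) → E →₀ ℤ),
      (∀ y ∈ u, f y ∈ P) → ∑ y ∈ u, f y ∈ P := fun u f hf =>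
    Finset.sum_induction f (· ∈ P) (fun a b ha hb => hadd a ha b hb) h0P hf
  have hP0' : (0 : E →₀ ℝ) ∈ ι '' P := ⟨0, h0P, hι0⟩
  have hPP : ∀ a ∈ ι '' P, ∀ b ∈ ι '' P, a + b ∈ ι '' P := by
    rintro _ ⟨p, hp, rfl⟩ _ ⟨q, hq, rfl⟩
    exact ⟨p + q, hadd p hp q hq, hιadd p q⟩
  have haddC : ∀ x ∈ convexHull ℝ (ι '' P), ∀ y ∈ convexHull ℝ (ι '' P),
      x + y ∈ convexHull ℝ (ι '' P) := by
    intro x hx y hy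
    have hsub : ι '' P + ι '' P ⊆ ι '' P := by
      rintro _ ⟨a, ha, b, hb, rfl⟩; exact hPP a ha b hb
    have hmono := convexHull_mono hsub (𝕜 := ℝ)
    rw [convexHull_add] at hmono
    exact hmono (Set.add_mem_add hx hy)
  have hιnsmul : ∀ (k : ℕ) (p : E →₀ ℤ), (k : ℝ) • ι p = ι (k • p) := by
    intro k p; ext e
    simp only [Finsupp.smul_apply, hιapp, smul_eq_mul, nsmul_eq_mul]
    push_cast
    ring
  have hsmulC : ∀ (α : ℝ), 0 ≤ α → ∀ x ∈ convexHull ℝ (ι '' P),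
      α • x ∈ convexHull ℝ (ι '' P) := by
    intro α hα x hx
    rcases eq_or_lt_of_le hα with h0 | hα'
    · rw [← h0, zero_smul]; exact subset_convexHull ℝ _ hP0'
    · have hsub : α • (ι '' P) ⊆ convexHull ℝ (ι '' P) := by
        rintro _ ⟨_, ⟨p, hp, rfl⟩, rfl⟩
        obtain ⟨k, hk⟩ := exists_nat_ge α
        have hk0 : (0:ℝ) < k := lt_of_lt_of_le hα' hk
        have hmem1 : ι (k • p) ∈ convexHull ℝ (ι '' P) :=
          subset_convexHull ℝ _ ⟨k • p, hnsmulP k p hp, rfl⟩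
        have hmem0 : (0 : E →₀ ℝ) ∈ convexHull ℝ (ι '' P) := subset_convexHull ℝ _ hP0'
        have ha' : (0:ℝ) ≤ α / k := div_nonneg hα hk0.le
        have hb' : (0:ℝ) ≤ 1 - α / k := by rw [sub_nonneg, div_le_one hk0]; exact hk
        have hab' : α / k + (1 - α / k) = 1 := by ring
        have hcomb := (convex_convexHull ℝ (ι '' P)) hmem1 hmem0 ha' hb' hab' 
        have heq : (α / k) • ι (k • p) + (1 - α / k) • (0 : E →₀ ℝ) = α • ι p := by
          rw [smul_zero, add_zero, ← hιnsmul, smul_smul, div_mul_cancel₀ _ (ne_of_gt hk0)]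
        rwa [heq] at hcomb
      have hmin := convexHull_min hsub (convex_convexHull ℝ (ι '' P))
      rw [convexHull_smul] at hmin
      exact hmin (Set.smul_mem_smul_set hx)
  have hCeq : convexHull ℝ (ι '' P) =
      {x | ∃ (s : Finset (E →₀ ℝ)) (c : (E →₀ ℝ) → ℝ),
        ↑s ⊆ ι '' P ∧ (∀ y ∈ s, 0 ≤ c y) ∧ ∑ y ∈ s, c y • y = x} := by
    apply Set.Subset.antisymm
    · apply convexHull_min
      · intro x hx
        exact ⟨{x}, fun _ => 1, by simpa using hx, fun _ _ => zero_le_one, by simp⟩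
      · rintro x ⟨s₁, c₁, h₁, hc₁, rfl⟩ y ⟨s₂, c₂, h₂, hc₂, rfl⟩ a b ha hb hab
        refine ⟨s₁ ∪ s₂,
          fun y => (if y ∈ s₁ then a * c₁ y else 0) + (if y ∈ s₂ then b * c₂ y else 0),
          ?_, ?_, ?_⟩
        · intro y hy
          rcases Finset.mem_union.mp (by exact_mod_cast hy) with h | h
          · exact h₁ (Finset.mem_coe.mpr h)
          · exact h₂ (Finset.mem_coe.mpr h)
        · intro y hy
          apply add_nonneg
          · split
            · exact mul_nonneg ha (hc₁ _ ‹_›)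
            · exact le_refl 0
          · split
            · exact mul_nonneg hb (hc₂ _ ‹_›)
            · exact le_refl 0
        · rw [stmt9comb]
          have e1 : ∑ y ∈ s₁, (a * c₁ y) • y = a • ∑ y ∈ s₁, c₁ y • y := by
            rw [Finset.smul_sum]
            exact Finset.sum_congr rfl fun y _ => (smul_smul a (c₁ y) y).symm
          have e2 : ∑ y ∈ s₂, (b * c₂ y) • y = b • ∑ y ∈ s₂, c₂ y • y := by
            rw [Finset.smul_sum]
            exact Finset.sum_congr rfl fun y _ => (smul_smul b (c₂ y) y).symm
          rw [e1, e2]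
    · rintro x ⟨s, c, hsub, hc, rfl⟩
      exact Finset.sum_induction _ (· ∈ convexHull ℝ (ι '' P))
        (fun a b ha hb => haddC a ha b hb) (subset_convexHull ℝ _ hP0')
        (fun y hy => hsmulC (c y) (hc y hy) y
          (subset_convexHull ℝ _ (hsub (Finset.mem_coe.mpr hy))))
  have hgex : ∀ y : E →₀ ℝ, ∃ p : E →₀ ℤ, y ∈ ι '' P → p ∈ P ∧ ι p = y := by
    intro y
    by_cases h : y ∈ ι '' P
    · obtain ⟨p, hp, he⟩ := h
      exact ⟨p, fun _ => ⟨hp, he⟩⟩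
    · exact ⟨0, fun hy => absurd hy h⟩
  choose g hgspec using hgex
  have hint : convexHull ℝ (ι '' P) ∩ (-(convexHull ℝ (ι '' P))) = {0} := by
    apply Set.Subset.antisymm
    · rintro x ⟨hx, hnx⟩
      rw [Set.mem_neg] at hnx
      rw [hCeq] at hx hnx
      obtain ⟨s₁, c₁, h₁, hc₁, hx₁⟩ := hx
      obtain ⟨s₂, c₂, h₂, hc₂, hx₂⟩ := hnx
      set ecoef : (E →₀ ℝ) → ℝ :=
        fun y => (if y ∈ s₁ then c₁ y else 0) + (if y ∈ s₂ then c₂ y else 0) with hecoef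
      have henn : ∀ y, 0 ≤ ecoef y := by
        intro y
        apply add_nonneg
        · split
          · exact hc₁ _ ‹_›
          · exact le_refl 0
        · split
          · exact hc₂ _ ‹_›
          · exact le_refl 0
      have hzero : ∑ y ∈ s₁ ∪ s₂, ecoef y • y = 0 := by
        simp only [hecoef]
        rw [stmt9comb, hx₁, hx₂]
        simp
      set u : Finset (E →₀ ℝ) := (s₁ ∪ s₂).filter (fun y => 0 < ecoef y) with hu
      have husub : ∀ y ∈ u, y ∈ ι '' P := by
        intro y hy
        rcases Finset.mem_union.mp (Finset.mem_filter.mp hy).1 with h | h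
        · exact h₁ (Finset.mem_coe.mpr h)
        · exact h₂ (Finset.mem_coe.mpr h)
      have huzero : ∑ y ∈ u, ecoef y • y = 0 := by
        rw [hu, Finset.sum_filter_of_ne]
        · exact hzero
        · intro y hy hne
          rcases lt_or_eq_of_le (henn y) with h | h
          · exact h
          · exact absurd (by rw [← h, zero_smul]) hne
      have hcoord : ∀ e : E, ∑ y ∈ u, ecoef y * ((g y) e : ℝ) = 0 := by
        intro e
        have h1 := congrArg (fun w => w e) huzero
        simp only [Finsupp.finset_sum_apply, Finsupp.smul_apply, smul_eq_mul,
          Finsupp.coe_zero, Pi.zero_apply] at h1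
        rw [← h1]
        refine Finset.sum_congr rfl fun y hy => ?_
        rw [← hιapp, (hgspec y (husub y hy)).2]
      obtain ⟨n, hn1, hnrel⟩ := stmt9key u g ecoef
        (fun y hy => (Finset.mem_filter.mp hy).2) hcoord
      have hPsum : ∑ y ∈ u, n y • g y = 0 := by
        ext e
        rw [Finsupp.finset_sum_apply]
        simpa [Finsupp.smul_apply, smul_eq_mul] using hnrel e
      have hyzero : ∀ y ∈ u, y = 0 := by
        intro y0 hy0
        have hgP : g y0 ∈ P := (hgspec y0 (husub y0 hy0)).1
        have hmem1 : n y0 • g y0 ∈ P := hzsmulP (n y0) (hn1 y0 hy0) _ hgP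
        have heq : n y0 • g y0 + ∑ y ∈ u.erase y0, n y • g y = 0 := by
          rw [Finset.add_sum_erase u (fun y => n y • g y) hy0]; exact hPsum
        have hmem2 : ∑ y ∈ u.erase y0, n y • g y ∈ P := by
          apply hsumP
          intro y hy
          exact hzsmulP (n y) (hn1 y (Finset.mem_of_mem_erase hy)) _
            (hgspec y (husub y (Finset.mem_of_mem_erase hy))).1
        have hmm : n y0 • g y0 ∈ P ∩ (-P) := by
          refine ⟨hmem1, ?_⟩
          rw [Set.mem_neg, neg_eq_of_add_eq_zero_right heq]
          exact hmem2
        rw [hpure] at hmm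
        have hz : n y0 • g y0 = 0 := hmm
        have hg0 : g y0 = 0 := by
          ext e
          have h2 := congrArg (fun w => w e) hz
          simp only [Finsupp.smul_apply, smul_eq_mul, Finsupp.coe_zero, Pi.zero_apply] at h2 ⊢
          have hne : n y0 ≠ 0 := by have := hn1 y0 hy0; omega
          exact (mul_eq_zero.mp h2).resolve_left hne
        rw [← (hgspec y0 (husub y0 hy0)).2, hg0, hι0]
      have hxz : x = 0 := by
        rw [← hx₁]
        apply Finset.sum_eq_zero
        intro y hy
        rcases lt_or_eq_of_le (hc₁ y hy) with h | h
        · have hyu : y ∈ u := by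
            rw [hu, Finset.mem_filter]
            refine ⟨Finset.mem_union_left _ hy, ?_⟩
            simp only [hecoef]
            have h2 : (0:ℝ) ≤ if y ∈ s₂ then c₂ y else 0 := by
              split
              · exact hc₂ _ ‹_›
              · exact le_refl 0
            rw [if_pos hy]
            linarith
          rw [hyzero y hyu, smul_zero]
        · rw [← h, zero_smul]
      exact hxz
    · intro x hx
      rw [Set.mem_singleton_iff] at hx; subst hx
      exact ⟨subset_convexHull ℝ _ hP0',
        by rw [Set.mem_neg, neg_zero]; exact subset_convexHull ℝ _ hP0'⟩
  have hintR : convexHull ℝ (ι '' P) ∩ Set.range ι = ι '' P := by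
    apply Set.Subset.antisymm
    · rintro x ⟨hx, z, rfl⟩
      rw [hCeq] at hx
      obtain ⟨s, c, hsub, hc, hsum⟩ := hx
      set u : Finset (E →₀ ℝ) := s.filter (fun y => 0 < c y) with hu
      have husub : ∀ y ∈ u, y ∈ ι '' P := fun y hy =>
        hsub (Finset.mem_coe.mpr (Finset.mem_filter.mp hy).1)
      have husum : ∑ y ∈ u, c y • y = ι z := by
        rw [hu, Finset.sum_filter_of_ne]
        · exact hsum
        · intro y hy hne
          rcases lt_or_eq_of_le (hc y hy) with h | h
          · exact h
          · exact absurd (by rw [← h, zero_smul]) hne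
      set s0 : Finset (Option (E →₀ ℝ)) := insert none (u.image some) with hs0
      set v : Option (E →₀ ℝ) → (E →₀ ℤ) := fun o => o.elim (-z) g with hv
      set c0 : Option (E →₀ ℝ) → ℝ := fun o => o.elim 1 c with hc0
      have hnone : (none : Option (E →₀ ℝ)) ∉ u.image some := by simp
      have hsomeinj : ∀ a ∈ u, ∀ b ∈ u, some a = some b → a = b := by
        intro a _ b _ h; exact Option.some_injective _ h
      have hpos : ∀ o ∈ s0, 0 < c0 o := by
        intro o ho
        rcases Finset.mem_insert.mp ho with rfl | ho
        · exact one_pos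
        · obtain ⟨y, hy, rfl⟩ := Finset.mem_image.mp ho
          exact (Finset.mem_filter.mp hy).2
      have hrel : ∀ e : E, ∑ o ∈ s0, c0 o * ((v o) e : ℝ) = 0 := by
        intro e
        rw [hs0, Finset.sum_insert hnone, Finset.sum_image hsomeinj]
        have h1 := congrArg (fun w => w e) husum
        simp only [Finsupp.finset_sum_apply, Finsupp.smul_apply, smul_eq_mul] at h1
        have h2 : ∑ y ∈ u, c0 (some y) * ((v (some y)) e : ℝ) = ((z e : ℤ) : ℝ) := by
          rw [← hιapp, ← h1]
          refine Finset.sum_congr rfl fun y hy => ?_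
          simp only [hc0, hv, Option.elim]
          congr 1
          rw [← hιapp, (hgspec y (husub y hy)).2]
        rw [h2]
        simp only [hc0, hv, Option.elim]
        rw [Finsupp.neg_apply]
        push_cast
        ring
      obtain ⟨n, hn1, hnrel⟩ := stmt9key s0 v c0 hpos hrel
      have hNz : (n none) • z = ∑ y ∈ u, n (some y) • g y := by
        ext e
        have h3 := hnrel e
        rw [hs0, Finset.sum_insert hnone, Finset.sum_image hsomeinj] at h3
        simp only [hv, Option.elim, Finsupp.neg_apply] at h3
        rw [Finsupp.smul_apply, Finsupp.finset_sum_apply]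
        simp only [Finsupp.smul_apply, smul_eq_mul]
        linarith
      have hzP : z ∈ P := by
        apply hsemi (n none) (hn1 none (Finset.mem_insert_self _ _)) z
        rw [hNz]
        apply hsumP
        intro y hy
        exact hzsmulP _ (hn1 (some y)
          (Finset.mem_insert_of_mem (Finset.mem_image_of_mem _ hy))) _
          (hgspec y (husub y hy)).1
      exact ⟨z, hzP, rfl⟩
    · rintro _ ⟨p, hp, rfl⟩
      exact ⟨subset_convexHull ℝ _ ⟨p, hp, rfl⟩, ⟨p, rfl⟩⟩
  exact ⟨hCeq, haddC, hsmulC, hint, hintR⟩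

/-- the convex hull in `⊕_E ℝ` of (the image of) the positive cone of a
semiclosed po-group order on `⊕_E ℤ` is the set of finite nonnegative real linear
combinations of elements of `ι '' P`, is a vector-space positive cone, meets the
integer vectors exactly in `ι '' P`, and the assignment `P ↦ convexHull ℝ (ι '' P)`
is injective. -/
theorem stmt9 {E : Type*}
    (ι : (E →₀ ℤ) → (E →₀ ℝ))
    (hι : ι = Finsupp.mapRange (fun z : ℤ => (z : ℝ)) (by norm_num))
    (P : Set (E →₀ ℤ))
    (hadd : ∀ x ∈ P, ∀ y ∈ P, x + y ∈ P)
    (hpure : P ∩ (-P) = {0})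
    (hsemi : ∀ (n : ℤ), 1 ≤ n → ∀ x : E →₀ ℤ, n • x ∈ P → x ∈ P) :
    (convexHull ℝ (ι '' P) =
      {x | ∃ (s : Finset (E →₀ ℝ)) (c : (E →₀ ℝ) → ℝ),
        ↑s ⊆ ι '' P ∧ (∀ y ∈ s, 0 ≤ c y) ∧ ∑ y ∈ s, c y • y = x}) ∧
    (∀ x ∈ convexHull ℝ (ι '' P), ∀ y ∈ convexHull ℝ (ι '' P),
      x + y ∈ convexHull ℝ (ι '' P)) ∧
    (∀ (α : ℝ), 0 ≤ α → ∀ x ∈ convexHull ℝ (ι '' P),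
      α • x ∈ convexHull ℝ (ι '' P)) ∧
    (convexHull ℝ (ι '' P) ∩ (-(convexHull ℝ (ι '' P))) = {0}) ∧
    (convexHull ℝ (ι '' P) ∩ Set.range ι = ι '' P) ∧
    (∀ P' : Set (E →₀ ℤ),
      (∀ x ∈ P', ∀ y ∈ P', x + y ∈ P') → (P' ∩ (-P') = {0}) →
      (∀ (n : ℤ), 1 ≤ n → ∀ x : E →₀ ℤ, n • x ∈ P' → x ∈ P') →
      convexHull ℝ (ι '' P) = convexHull ℝ (ι '' P') → P = P') := by
  obtain ⟨h1, h2, h3, h4, h5⟩ := stmt9aux ι hι P hadd hpure hsemi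
  refine ⟨h1, h2, h3, h4, h5, ?_⟩
  intro P' hadd' hpure' hsemi' hEq
  have h5' := (stmt9aux ι hι P' hadd' hpure' hsemi').2.2.2.2
  have himg : ι '' P = ι '' P' := by rw [← h5, ← h5', hEq]
  have hinj : Function.Injective ι := by
    rw [hι]; exact Finsupp.mapRange_injective _ _ Int.cast_injective
  exact Set.image_injective.mpr hinj himg
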